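/- Let m ≥ 2, let H be the space of real polynomials of degree at most m vanishing at 0 and 1 with the L² inner product ⟨f,g⟩ = ∫₀¹ f(x) g(x) dx, let x_0, …, x_{m−2} be m−1 pairwise distinct points in (0,1), and for each k let ψ_k ∈ H be the Riesz representer of y ↦ y''(x_k). Let ψ̄_i = Σ_{k=0}^{i} β_{ik} ψ_k (i = 0, …, m−2) be an orthonormal basis of H obtained by Gram–Schmidt orthonormalization of ψ_0, …, ψ_{m−2}, with real coefficients β_{ik}. If g : [0,1] × ℝ → ℝ and y ∈ H satisfies y''(x) = g(x, y(x)) for all x ∈ [0,1], then y(x) = Σ_{i=0}^{m−2} Σ_{k=0}^{i} β_{ik} g(x_k, y(x_k)) ψ̄_i(x) for all x ∈ [0,1]. -/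

import Mathlib

/-- The space `H` of real polynomials of degree at most `m` vanishing at `0` and at `1`. -/
noncomputable def bratuSpace (m : ℕ) : Submodule ℝ (Polynomial ℝ) :=
  Polynomial.degreeLE ℝ (m : WithBot ℕ) ⊓ LinearMap.ker (Polynomial.leval (0:ℝ)) ⊓
    LinearMap.ker (Polynomial.leval (1:ℝ))

/-- With `H` the space of polynomials of degree at most `m` vanishing at
`0` and `1`, `x_0, …, x_{m−2}` distinct points of `(0,1)`, `ψ_k ∈ H` the Riesz
representer of `y ↦ y''(x_k)`, and `ψ̄_i = Σ_{k≤i} β_{ik} ψ_k` an orthonormal basis of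
`H` obtained by Gram–Schmidt, if `y ∈ H` satisfies `y''(x) = g(x, y(x))` on `[0,1]`,
then `y(x) = Σ_{i} Σ_{k≤i} β_{ik} g(x_k, y(x_k)) ψ̄_i(x)` on `[0,1]`. -/
theorem stmt_9 (m : ℕ) (hm : 2 ≤ m)
    (x : Fin (m - 1) → ℝ) (hinj : Function.Injective x)
    (hmem : ∀ i, x i ∈ Set.Ioo (0:ℝ) 1)
    (ψ : Fin (m - 1) → Polynomial ℝ)
    (hψmem : ∀ k, ψ k ∈ bratuSpace m)
    (hψ : ∀ k, ∀ y ∈ bratuSpace m,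
      (∫ s in (0:ℝ)..1, y.eval s * (ψ k).eval s) =
        (Polynomial.derivative (Polynomial.derivative y)).eval (x k))
    (β : Fin (m - 1) → Fin (m - 1) → ℝ)
    (ψbar : Fin (m - 1) → Polynomial ℝ)
    (hbar : ∀ i, ψbar i = ∑ k ∈ Finset.Iic i, β i k • ψ k)
    (horth : ∀ i j, (∫ s in (0:ℝ)..1, (ψbar i).eval s * (ψbar j).eval s) =
      if i = j then 1 else 0)
    (hspan : ∀ y ∈ bratuSpace m, y ∈ Submodule.span ℝ (Set.range ψbar))
    (g : ℝ → ℝ → ℝ) (y : Polynomial ℝ) (hy : y ∈ bratuSpace m)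
    (hode : ∀ t ∈ Set.Icc (0:ℝ) 1,
      (Polynomial.derivative (Polynomial.derivative y)).eval t = g t (y.eval t)) :
    ∀ t ∈ Set.Icc (0:ℝ) 1,
      y.eval t = ∑ i, ∑ k ∈ Finset.Iic i,
        β i k * g (x k) (y.eval (x k)) * (ψbar i).eval t := by
  -- coefficients of y in the ψbar basis
  obtain ⟨c, hc⟩ := (Submodule.mem_span_range_iff_exists_fun ℝ).mp (hspan y hy)
  have hint : ∀ p q : Polynomial ℝ,
      IntervalIntegrable (fun s => p.eval s * q.eval s) MeasureTheory.volume 0 1 :=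
    fun p q => ((p.continuous.mul q.continuous)).intervalIntegrable 0 1
  -- ⟨y, ψbar i⟩ = Σ_k β i k * g (x k) (y (x k))
  have hA : ∀ i, (∫ s in (0:ℝ)..1, y.eval s * (ψbar i).eval s) =
      ∑ k ∈ Finset.Iic i, β i k * g (x k) (y.eval (x k)) := by
    intro i
    have : (fun s => y.eval s * (ψbar i).eval s) =
        fun s => ∑ k ∈ Finset.Iic i, β i k * (y.eval s * (ψ k).eval s) := by
      funext s
      rw [hbar i]
      simp [Polynomial.eval_finset_sum, Finset.mul_sum]
      ring_nf
    rw [this, intervalIntegral.integral_finset_sum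
      (f := fun k s => β i k * (y.eval s * (ψ k).eval s)) (fun k _ => ((continuous_const.mul
        (y.continuous.mul (ψ k).continuous))).intervalIntegrable 0 1)]
    refine Finset.sum_congr rfl fun k _ => ?_
    rw [intervalIntegral.integral_const_mul, hψ k y hy,
      hode (x k) (Set.Ioo_subset_Icc_self (hmem k))]
  -- ⟨y, ψbar i⟩ = c i
  have hB : ∀ i, (∫ s in (0:ℝ)..1, y.eval s * (ψbar i).eval s) = c i := by
    intro i
    have : (fun s => y.eval s * (ψbar i).eval s) =
        fun s => ∑ j, c j * ((ψbar j).eval s * (ψbar i).eval s) := by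
      funext s
      rw [← hc]
      simp [Polynomial.eval_finset_sum, Finset.sum_mul, mul_assoc]
    rw [this, intervalIntegral.integral_finset_sum
      (f := fun j s => c j * ((ψbar j).eval s * (ψbar i).eval s)) (fun j _ => ((continuous_const.mul
        ((ψbar j).continuous.mul (ψbar i).continuous))).intervalIntegrable 0 1)]
    simp only [intervalIntegral.integral_const_mul, horth]
    simp
  intro t _
  have : y.eval t = ∑ i, c i * (ψbar i).eval t := by
    rw [← hc]; simp [Polynomial.eval_finset_sum]
  rw [this]
  refine Finset.sum_congr rfl fun i _ => ?_
  rw [← hB i, hA i, Finset.sum_mul]
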